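/- Let δ > 0, Q_δ(a) = δ(⌊a/δ⌋ + 1/2), and let τ ∼ U([−δ/2, δ/2]). Then for any fixed reals x and y, P(Q_δ(x − τ) ≠ Q_δ(y − τ)) = min{|x − y|/δ, 1}. -/

import Mathlib

open MeasureTheory

/-- The uniform (mid-point) quantizer with resolution `δ`. -/
noncomputable def Qdelta (δ a : ℝ) : ℝ := δ * (⌊a / δ⌋ + 1 / 2)

open Set in
private lemma key_floor_measure (δ : ℝ) (hδ : 0 < δ) (x y : ℝ) (hxy : x ≤ y) :
    volume ({τ : ℝ | ⌊(x - τ)/δ⌋ ≠ ⌊(y - τ)/δ⌋} ∩ Ioc (-(δ/2)) (-(δ/2) + δ))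
      = ENNReal.ofReal (min (y - x) δ) := by
  set S : Set ℝ := {τ : ℝ | ⌊(x - τ)/δ⌋ ≠ ⌊(y - τ)/δ⌋} with hS
  have hmeas : MeasurableSet S := by
    have h1 : Measurable (fun τ : ℝ => ⌊(x - τ)/δ⌋) :=
      (measurable_const.sub measurable_id).div_const δ |>.floor
    have h2 : Measurable (fun τ : ℝ => ⌊(y - τ)/δ⌋) :=
      (measurable_const.sub measurable_id).div_const δ |>.floor
    exact (measurableSet_eq_fun h1 h2).compl
  have hinv : ∀ g : AddSubgroup.zmultiples δ, (fun τ : ℝ => (g : ℝ) + τ) ⁻¹' S = S := by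
    rintro ⟨g, n, rfl⟩
    ext τ
    have key : ∀ z : ℝ, ⌊(z - (n • δ + τ))/δ⌋ = ⌊(z - τ)/δ⌋ - n := by
      intro z
      have : (z - (n • δ + τ))/δ = (z - τ)/δ - n := by
        field_simp
        ring
      rw [this, Int.floor_sub_intCast]
    simp only [S, mem_preimage, mem_setOf_eq, key, AddSubgroup.coe_mk]
    constructor <;> intro h <;> omega
  have hswap := (isAddFundamentalDomain_Ioc hδ (-(δ/2))).measure_set_eq
    (isAddFundamentalDomain_Ioc hδ x) hmeas hinv
  rw [hswap]
  rcases lt_or_ge (y - x) δ with hlt | hge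
  · have heq : S ∩ Ioc x (x + δ) = Ioc x y := by
      ext τ
      simp only [S, mem_inter_iff, mem_setOf_eq, mem_Ioc]
      constructor
      · rintro ⟨hne, hx, hxd⟩
        refine ⟨hx, ?_⟩
        by_contra hy
        push_neg at hy
        apply hne
        have hfx : ⌊(x - τ)/δ⌋ = -1 := by
          rw [Int.floor_eq_iff]
          push_cast
          constructor
          · rw [le_div_iff₀ hδ]; linarith
          · rw [div_lt_iff₀ hδ]; linarith
        have hfy : ⌊(y - τ)/δ⌋ = -1 := by
          rw [Int.floor_eq_iff]
          push_cast
          constructor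
          · rw [le_div_iff₀ hδ]; linarith
          · rw [div_lt_iff₀ hδ]; linarith
        rw [hfx, hfy]
      · rintro ⟨hx, hy⟩
        have hτd : τ ≤ x + δ := by linarith
        refine ⟨?_, hx, hτd⟩
        have hfx : ⌊(x - τ)/δ⌋ = -1 := by
          rw [Int.floor_eq_iff]
          push_cast
          constructor
          · rw [le_div_iff₀ hδ]; linarith
          · rw [div_lt_iff₀ hδ]; linarith
        have hfy : ⌊(y - τ)/δ⌋ = 0 := by
          rw [Int.floor_eq_iff]
          push_cast
          constructor
          · rw [le_div_iff₀ hδ]; linarith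
          · rw [div_lt_iff₀ hδ]; linarith
        rw [hfx, hfy]; omega
    rw [heq, Real.volume_Ioc, min_eq_left hlt.le]
  · have heq : S ∩ Ioc x (x + δ) = Ioc x (x + δ) := by
      refine inter_eq_right.mpr fun τ _ => ?_
      simp only [S, mem_setOf_eq]
      have h1 : (x - τ)/δ + 1 ≤ (y - τ)/δ := by
        rw [div_add' _ _ _ hδ.ne', div_le_div_iff₀ hδ hδ]
        nlinarith
      have h2 : ⌊(x - τ)/δ⌋ + 1 ≤ ⌊(y - τ)/δ⌋ := by
        calc ⌊(x - τ)/δ⌋ + 1 = ⌊(x - τ)/δ + 1⌋ := (Int.floor_add_one _).symm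
        _ ≤ ⌊(y - τ)/δ⌋ := Int.floor_mono h1
      omega
    rw [heq, Real.volume_Ioc, min_eq_right hge]
    ring_nf

open Set in
private lemma stmt_aux (δ : ℝ) (hδ : 0 < δ) (x y : ℝ) (hxy : x ≤ y) :
    (ENNReal.ofReal δ⁻¹ • volume.restrict (Set.Icc (-(δ / 2)) (δ / 2)))
        {τ : ℝ | Qdelta δ (x - τ) ≠ Qdelta δ (y - τ)}
      = ENNReal.ofReal (min ((y - x) / δ) 1) := by
  have hsetQ : {τ : ℝ | Qdelta δ (x - τ) ≠ Qdelta δ (y - τ)}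
      = {τ : ℝ | ⌊(x - τ)/δ⌋ ≠ ⌊(y - τ)/δ⌋} := by
    ext τ
    simp only [mem_setOf_eq, Qdelta, not_iff_not]
    constructor
    · intro h
      have h' := mul_left_cancel₀ hδ.ne' h
      have : (⌊(x - τ)/δ⌋ : ℝ) = ⌊(y - τ)/δ⌋ := by linarith
      exact_mod_cast this
    · intro h; rw [h]
  rw [hsetQ]
  set S : Set ℝ := {τ : ℝ | ⌊(x - τ)/δ⌋ ≠ ⌊(y - τ)/δ⌋} with hS
  have hmeas : MeasurableSet S := by
    have h1 : Measurable (fun τ : ℝ => ⌊(x - τ)/δ⌋) :=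
      (measurable_const.sub measurable_id).div_const δ |>.floor
    have h2 : Measurable (fun τ : ℝ => ⌊(y - τ)/δ⌋) :=
      (measurable_const.sub measurable_id).div_const δ |>.floor
    exact (measurableSet_eq_fun h1 h2).compl
  rw [Measure.smul_apply, smul_eq_mul, Measure.restrict_apply hmeas]
  have hIcc : volume (S ∩ Icc (-(δ/2)) (δ/2))
      = volume (S ∩ Ioc (-(δ/2)) (-(δ/2) + δ)) := by
    have he : -(δ/2) + δ = δ/2 := by ring
    rw [he]
    apply le_antisymm
    · calc volume (S ∩ Icc (-(δ/2)) (δ/2))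
          ≤ volume ((S ∩ Ioc (-(δ/2)) (δ/2)) ∪ {-(δ/2)}) := by
            apply measure_mono
            rintro τ ⟨hτS, hτ1, hτ2⟩
            rcases eq_or_lt_of_le hτ1 with h | h
            · exact Or.inr (by simp [h.symm])
            · exact Or.inl ⟨hτS, h, hτ2⟩
      _ ≤ volume (S ∩ Ioc (-(δ/2)) (δ/2)) + volume ({-(δ/2)} : Set ℝ) :=
            measure_union_le _ _
      _ = volume (S ∩ Ioc (-(δ/2)) (δ/2)) := by simp
    · exact measure_mono (inter_subset_inter_right _ Ioc_subset_Icc_self)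
  rw [hIcc, key_floor_measure δ hδ x y hxy,
    ← ENNReal.ofReal_mul (inv_nonneg.mpr hδ.le)]
  congr 1
  rcases le_total (y - x) δ with h | h
  · rw [min_eq_left h, min_eq_left (by rw [div_le_one hδ]; exact h)]
    rw [div_eq_inv_mul]
  · rw [min_eq_right h, min_eq_right (by rw [le_div_iff₀ hδ]; linarith)]
    field_simp

/-- For a dither `τ` uniformly distributed on `[-δ/2, δ/2]`,
`P(Q_δ(x - τ) ≠ Q_δ(y - τ)) = min {|x - y|/δ, 1}` for any fixed reals `x, y`. -/
theorem stmt_19 (δ : ℝ) (hδ : 0 < δ) (x y : ℝ) :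
    (ENNReal.ofReal δ⁻¹ • volume.restrict (Set.Icc (-(δ / 2)) (δ / 2)))
        {τ : ℝ | Qdelta δ (x - τ) ≠ Qdelta δ (y - τ)}
      = ENNReal.ofReal (min (|x - y| / δ) 1) := by
  rcases le_total x y with h | h
  · rw [abs_sub_comm, abs_of_nonneg (sub_nonneg.mpr h)]
    exact stmt_aux δ hδ x y h
  · rw [abs_of_nonneg (sub_nonneg.mpr h)]
    have : {τ : ℝ | Qdelta δ (x - τ) ≠ Qdelta δ (y - τ)}
        = {τ : ℝ | Qdelta δ (y - τ) ≠ Qdelta δ (x - τ)} := by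
      ext τ; exact ne_comm
    rw [this]
    exact stmt_aux δ hδ y x h
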